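/- Let θ_0,…,θ_M be M+1 distinct real nodes with θ_0 = 0, and let D_M be the M×M matrix obtained from the differentiation matrix D̂_M by removing its first row and first column. Then D_M is invertible. -/
import Mathlib


open Finset Polynomial

/-- If `θ_0 = 0`, the matrix `D_M` obtained from the differentiation matrix `D̂_M`
by removing the first row and first column is invertible. -/
theorem reduced_differentiation_matrix_invertible
    (M : ℕ) (hM : 1 ≤ M) (θn : Fin (M + 1) → ℝ) (hθ : Function.Injective θn)
    (hθ0 : θn 0 = 0)
    (Dhat : Matrix (Fin (M + 1)) (Fin (M + 1)) ℝ)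
    (hD : ∀ i j, Dhat i j =
      (Polynomial.derivative (Lagrange.basis Finset.univ θn j)).eval (θn i))
    (D : Matrix (Fin M) (Fin M) ℝ)
    (hDM : ∀ i j, D i j = Dhat i.succ j.succ) :
    IsUnit D.det := by
  rw [← Matrix.isUnit_iff_isUnit_det, ← Matrix.mulVec_injective_iff_isUnit]
  have hinj : ∀ x : Fin M → ℝ, D.mulVec x = 0 → x = 0 := by
    intro x hx
    set p : ℝ[X] := ∑ j : Fin M, Polynomial.C (x j) * Lagrange.basis Finset.univ θn j.succ
      with hp
    have hθinj : Set.InjOn θn ↑(Finset.univ : Finset (Fin (M + 1))) :=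
      hθ.injOn
    -- evaluate p at nodes
    have hpeval : ∀ k : Fin (M + 1), p.eval (θn k) =
        ∑ j : Fin M, x j * (Lagrange.basis Finset.univ θn j.succ).eval (θn k) := by
      intro k
      simp [hp, Polynomial.eval_finset_sum]
    -- derivative of p vanishes at θn i.succ
    have hder0 : ∀ i : Fin M, (Polynomial.derivative p).eval (θn i.succ) = 0 := by
      intro i
      have h1 : (Polynomial.derivative p).eval (θn i.succ) = D.mulVec x i := by
        simp only [hp, map_sum, Polynomial.derivative_C_mul, Polynomial.eval_finset_sum,
          Polynomial.eval_mul, Polynomial.eval_C, Matrix.mulVec, dotProduct]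
        refine Finset.sum_congr rfl fun j _ => ?_
        rw [hDM, hD]
        ring
      rw [h1, hx, Pi.zero_apply]
    -- derivative p has low degree and M roots, hence is zero
    have hdeg : p.natDegree ≤ M := by
      refine Polynomial.natDegree_sum_le_of_forall_le _ _ fun j _ => ?_
      refine le_trans (Polynomial.natDegree_C_mul_le _ _) ?_
      rw [Lagrange.natDegree_basis hθinj (Finset.mem_univ _)]
      simp
    have hderzero : Polynomial.derivative p = 0 := by
      refine Polynomial.eq_zero_of_natDegree_lt_card_of_eval_eq_zero _
        (f := fun i : Fin M => θn i.succ) (fun a b hab => ?_) hder0 ?_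
      · exact Fin.succ_injective M (hθ hab)
      · calc (Polynomial.derivative p).natDegree ≤ p.natDegree - 1 :=
              Polynomial.natDegree_derivative_le p
          _ ≤ M - 1 := Nat.sub_le_sub_right hdeg 1
          _ < M := by omega
          _ = Fintype.card (Fin M) := (Fintype.card_fin M).symm
    -- so p is constant
    have hc : p = Polynomial.C (p.coeff 0) := Polynomial.eq_C_of_derivative_eq_zero hderzero
    -- p vanishes at θn 0, hence c = 0, hence p = 0
    have hp0 : p.eval (θn 0) = 0 := by
      rw [hpeval]
      refine Finset.sum_eq_zero fun j _ => ?_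
      rw [Lagrange.eval_basis_of_ne (Fin.succ_ne_zero j) (Finset.mem_univ _), mul_zero]
    have hc0 : p.coeff 0 = 0 := by
      have := hp0
      rw [hc, Polynomial.eval_C] at this
      exact this
    have hpzero : p = 0 := by rw [hc, hc0, map_zero]
    -- conclude x = 0
    funext k
    have hk : p.eval (θn k.succ) = x k := by
      rw [hpeval]
      rw [Finset.sum_eq_single k]
      · rw [Lagrange.eval_basis_self hθinj (Finset.mem_univ _), mul_one]
      · intro j _ hjk
        rw [Lagrange.eval_basis_of_ne (fun h => hjk (Fin.succ_injective M h))
          (Finset.mem_univ _), mul_zero]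
      · intro h; exact absurd (Finset.mem_univ k) h
    rw [hpzero] at hk
    simpa using hk.symm
  intro a b hab
  have : D.mulVec (a - b) = 0 := by
    rw [Matrix.mulVec_sub, hab, sub_self]
  have := hinj _ this
  exact sub_eq_zero.mp this
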